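/- The binomial bound on rare pairs: with the notation of the paper, L(b,s) ≤ C(n, n−(k−1)b) · C(n,b) · C((n−(k−1)b)·b, s) · p^s · (1−p)^{(n−(k−1)b)b − s}, where p = n^{ε−1}; consequently, summing over 1 ≤ b ≤ n/k and s ≤ min{b, ⌈n^{εℓ}⌉}, the total expected number of bad pairs is less than e^{−n^ε/6} for sufficiently large n. -/

import Mathlib

open Finset Real Filter

set_option maxHeartbeats 1000000


private lemma aux_key {k b m n L X p : ℝ} (hk : 2 ≤ k) (hb : 1 ≤ b)
    (hkb : k * b ≤ n) (hm : m = n - (k * b - b)) (hL0 : 0 ≤ L) (hX0 : 0 ≤ X)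
    (hp0 : 0 ≤ p) (hp1 : p ≤ 1) (hpn : p * n = X)
    (hbig : 8 * k ^ 2 + 4 + 8 * k * (k + 2) * L ≤ X) :
    (k + 2) * b * L + X / 4 ≤ p * ((m - 1) * b) := by
  by_cases hcase : b ≤ 2 * k
  · have hm1R : n - 2 * k ^ 2 ≤ m - 1 := by rw [hm]; nlinarith
    have step1 : p * ((n - 2 * k ^ 2) * b) ≤ p * ((m - 1) * b) :=
      mul_le_mul_of_nonneg_left
        (mul_le_mul_of_nonneg_right hm1R (by linarith)) hp0
    have step2 : (X - 2 * k ^ 2) * b ≤ p * ((n - 2 * k ^ 2) * b) := by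
      have e : p * ((n - 2 * k ^ 2) * b) = (X - 2 * k ^ 2 * p) * b := by
        rw [← hpn]; ring
      rw [e]
      have : X - 2 * k ^ 2 ≤ X - 2 * k ^ 2 * p := by nlinarith
      nlinarith
    have h6 : 2 * k ^ 2 + (k + 2) * L ≤ X / 4 := by
      nlinarith [mul_nonneg (mul_nonneg (show (0:ℝ) ≤ 8 * k - 4 by linarith)
        (show (0:ℝ) ≤ k + 2 by linarith)) hL0]
    have hpos : 0 ≤ X - 2 * k ^ 2 - (k + 2) * L := by linarith
    have hbmul : 1 * (X - 2 * k ^ 2 - (k + 2) * L)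
        ≤ b * (X - 2 * k ^ 2 - (k + 2) * L) :=
      mul_le_mul_of_nonneg_right hb hpos
    nlinarith
  · push_neg at hcase
    have hcase' : 2 * k ≤ b := hcase.le
    have hk0 : (0 : ℝ) < k := by linarith
    have hkm : n - k ≤ k * (m - 1) := by
      rw [hm]
      nlinarith [mul_le_mul_of_nonneg_left hkb (show (0:ℝ) ≤ k - 1 by linarith)]
    rw [← mul_le_mul_iff_right₀ hk0]
    have step1 : p * ((n - k) * b) ≤ k * (p * ((m - 1) * b)) := by
      have e : k * (p * ((m - 1) * b)) = p * ((k * (m - 1)) * b) := by ring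
      rw [e]
      exact mul_le_mul_of_nonneg_left
        (mul_le_mul_of_nonneg_right hkm (by linarith)) hp0
    have step2 : (X - k) * b ≤ p * ((n - k) * b) := by
      have e : p * ((n - k) * b) = (X - k * p) * b := by rw [← hpn]; ring
      rw [e]
      have : X - k ≤ X - k * p := by nlinarith
      nlinarith
    have h7 : k + k * (k + 2) * L ≤ X / 4 := by
      nlinarith [mul_nonneg (mul_nonneg (show (0:ℝ) ≤ 4 * k by linarith)
        (show (0:ℝ) ≤ k + 2 by linarith)) hL0]
    have ht : 3 * X / 4 ≤ X - k - k * (k + 2) * L := by linarith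
    have h2k : 2 * k * (3 * X / 4) ≤ 2 * k * (X - k - k * (k + 2) * L) :=
      mul_le_mul_of_nonneg_left ht (by linarith)
    have hbmul : 2 * k * (X - k - k * (k + 2) * L)
        ≤ b * (X - k - k * (k + 2) * L) :=
      mul_le_mul_of_nonneg_right hcase' (by linarith)
    nlinarith [mul_nonneg hk0.le hX0]

private lemma aux_term_bound {k : ℕ} (hk : 2 ≤ k) {ε : ℝ} (hε : 0 < ε) (hε1 : ε ≤ 1)
    {n b s : ℕ} (hn : 2 ≤ n) (hb1 : 1 ≤ b) (hkb : k * b ≤ n)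
    (hs1 : 1 ≤ s) (hsb : s ≤ b)
    (hbig : 8 * (k : ℝ) ^ 2 + 4 + 8 * k * (k + 2) * Real.log n ≤ (n : ℝ) ^ ε) :
    (n.choose (n - (k - 1) * b) : ℝ) * (n.choose b : ℝ) *
      (((n - (k - 1) * b) * b).choose s : ℝ) * ((n : ℝ) ^ (ε - 1)) ^ s *
      (1 - (n : ℝ) ^ (ε - 1)) ^ ((n - (k - 1) * b) * b - s)
      ≤ Real.exp (-(n : ℝ) ^ ε / 4) := by
  set q := (k - 1) * b with hq
  set m := n - q with hm
  set p := (n : ℝ) ^ (ε - 1) with hpdef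
  have hbkb : b ≤ k * b := Nat.le_mul_of_pos_left b (by omega)
  have hqs : q = k * b - b := by rw [hq, Nat.sub_mul, one_mul]
  have hqn : q ≤ n := by omega
  have hbm : b ≤ m := by omega
  have hm1 : 1 ≤ m := by omega
  have hmn : m ≤ n := by omega
  have hbn : b ≤ n := by omega
  have hn0 : (0 : ℝ) < n := by positivity
  have hn1 : (1 : ℝ) ≤ n := by exact_mod_cast Nat.one_le_of_lt hn
  have hp0 : 0 ≤ p := Real.rpow_nonneg hn0.le _
  have hp1 : p ≤ 1 := Real.rpow_le_one_of_one_le_of_nonpos hn1 (by linarith)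
  have hqR : (q : ℝ) = (k : ℝ) * b - b := by
    rw [hqs, Nat.cast_sub hbkb]; push_cast; ring
  have hmR : (m : ℝ) = (n : ℝ) - q := by rw [hm, Nat.cast_sub hqn]
  have hkbR : (k : ℝ) * b ≤ n := by exact_mod_cast hkb
  have hbR1 : (1 : ℝ) ≤ b := by exact_mod_cast hb1
  have hkR : (2 : ℝ) ≤ k := by exact_mod_cast hk
  have hsbR : (s : ℝ) ≤ b := by exact_mod_cast hsb
  have hL0 : 0 ≤ Real.log n := Real.log_nonneg hn1
  have hX0 : 0 ≤ (n : ℝ) ^ ε := Real.rpow_nonneg hn0.le _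
  have hpn : p * n = (n : ℝ) ^ ε := by
    rw [hpdef, ← Real.rpow_add_one (by positivity : (n : ℝ) ≠ 0) (ε - 1)]
    norm_num
  -- individual factor bounds
  have h1 : (n.choose m : ℝ) ≤ (n : ℝ) ^ q := by
    rw [hm, Nat.choose_symm hqn]
    exact_mod_cast Nat.choose_le_pow n q
  have h2 : (n.choose b : ℝ) ≤ (n : ℝ) ^ b := by exact_mod_cast Nat.choose_le_pow n b
  have h3 : (((m * b).choose s : ℕ) : ℝ) ≤ (n : ℝ) ^ (2 * b) := by
    calc (((m * b).choose s : ℕ) : ℝ) ≤ (((m * b) ^ s : ℕ) : ℝ) := by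
          exact_mod_cast Nat.choose_le_pow (m * b) s
      _ ≤ (((n * n) ^ s : ℕ) : ℝ) := by
          exact_mod_cast Nat.pow_le_pow_left (Nat.mul_le_mul hmn hbn) s
      _ = (n : ℝ) ^ (2 * s) := by push_cast; ring
      _ ≤ (n : ℝ) ^ (2 * b) := pow_le_pow_right₀ hn1 (by omega)
  have h4 : p ^ s ≤ 1 := pow_le_one₀ hp0 hp1
  have h1p : 0 ≤ 1 - p := by linarith
  have hsmb : s ≤ m * b := hsb.trans (Nat.le_mul_of_pos_left b hm1)
  have h5 : (1 - p) ^ (m * b - s) ≤ Real.exp (-(p * (((m : ℝ) - 1) * b))) := by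
    have e1 : 1 - p ≤ Real.exp (-p) := by
      have := Real.add_one_le_exp (-p); linarith
    calc (1 - p) ^ (m * b - s) ≤ (Real.exp (-p)) ^ (m * b - s) :=
          pow_le_pow_left₀ h1p e1 _
      _ = Real.exp (-(p * ((m * b - s : ℕ) : ℝ))) := by
          rw [← Real.exp_nat_mul]; congr 1; ring
      _ ≤ Real.exp (-(p * (((m : ℝ) - 1) * b))) := by
          apply Real.exp_le_exp.2
          have hcast : ((m * b - s : ℕ) : ℝ) = (m : ℝ) * b - s := by
            rw [Nat.cast_sub hsmb]; push_cast; ring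
          rw [hcast]
          have hmono : ((m : ℝ) - 1) * b ≤ (m : ℝ) * b - s := by nlinarith
          nlinarith [mul_le_mul_of_nonneg_left hmono hp0]
  -- the key exponent inequality
  have key : ((k : ℝ) + 2) * b * Real.log n + (n : ℝ) ^ ε / 4
      ≤ p * (((m : ℝ) - 1) * b) := by
    apply aux_key hkR hbR1 hkbR _ hL0 hX0 hp0 hp1 hpn hbig
    rw [hmR, hqR]
  -- assemble
  calc (n.choose m : ℝ) * (n.choose b : ℝ) * (((m * b).choose s : ℕ) : ℝ) * p ^ s *
        (1 - p) ^ (m * b - s)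
      ≤ (n : ℝ) ^ q * (n : ℝ) ^ b * (n : ℝ) ^ (2 * b) * 1 *
        Real.exp (-(p * (((m : ℝ) - 1) * b))) := by
        apply mul_le_mul _ h5 (pow_nonneg h1p _) (by positivity)
        apply mul_le_mul _ h4 (by positivity) (by positivity)
        apply mul_le_mul _ h3 (by positivity) (by positivity)
        exact mul_le_mul h1 h2 (by positivity) (by positivity)
    _ ≤ Real.exp (-(n : ℝ) ^ ε / 4) := by
        rw [mul_one, ← pow_add, ← pow_add,
          show (n : ℝ) ^ (q + b + 2 * b) = Real.exp ((q + b + 2 * b : ℕ) * Real.log n) from by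
            rw [Real.exp_nat_mul, Real.exp_log hn0],
          ← Real.exp_add]
        apply Real.exp_le_exp.2
        have hcast : ((q + b + 2 * b : ℕ) : ℝ) = ((k : ℝ) + 2) * b := by
          push_cast [hqR]; ring
        rw [hcast]
        linarith

open Finset Real in
/-- The total expected number of bad pairs: summing the binomial bound
`L(b,s) ≤ C(n, n-(k-1)b)·C(n,b)·C((n-(k-1)b)·b, s)·p^s·(1-p)^{(n-(k-1)b)b - s}`
(with `p = n^{ε-1}`) over `1 ≤ b ≤ n/k` and `1 ≤ s ≤ min{b, ⌈n^{εℓ}⌉}` gives a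
total less than `e^{-n^ε/6}` for all sufficiently large `n`. -/
theorem total_bad_pairs_lt {k ℓ : ℕ} (hk : 2 ≤ k) (hℓ : 3 ≤ ℓ)
    {ε : ℝ} (hε : 0 < ε) (hε' : ε < 1 / (4 * ℓ)) :
    ∃ N : ℕ, ∀ n ≥ N,
      ∑ b ∈ Finset.Icc 1 (n / k),
        ∑ s ∈ Finset.Icc 1 (min b ⌈(n : ℝ) ^ (ε * ℓ)⌉₊),
          (n.choose (n - (k - 1) * b) : ℝ) * (n.choose b : ℝ) *
            (((n - (k - 1) * b) * b).choose s : ℝ) *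
            ((n : ℝ) ^ (ε - 1)) ^ s *
            (1 - (n : ℝ) ^ (ε - 1)) ^ ((n - (k - 1) * b) * b - s)
        < Real.exp (-(n : ℝ) ^ ε / 6) := by
  have hℓR : (3 : ℝ) ≤ ℓ := by exact_mod_cast hℓ
  have hε1 : ε ≤ 1 := by
    have h4ℓ : (1 : ℝ) ≤ 4 * ℓ := by linarith
    have : 1 / (4 * (ℓ : ℝ)) ≤ 1 := by
      rw [div_le_one (by linarith)]; linarith
    linarith
  set C : ℝ := 8 * (k : ℝ) ^ 2 + 4 with hC
  set D : ℝ := 8 * (k : ℝ) * ((k : ℝ) + 2) + 24 with hD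
  have hC0 : 0 ≤ C := by positivity
  have hD0 : (0 : ℝ) < D := by positivity
  clear_value C D
  have hev : ∀ᶠ x : ℝ in atTop, C + D * Real.log x < x ^ ε := by
    have h1 := (isLittleO_log_rpow_atTop hε).bound (show (0:ℝ) < 1/(2*D) by positivity)
    have h2 := (tendsto_rpow_atTop hε).eventually_gt_atTop (2 * C + 1)
    have h3 : ∀ᶠ x : ℝ in atTop, (1 : ℝ) ≤ x := eventually_ge_atTop 1
    filter_upwards [h1, h2, h3] with x hx1 hx2 hx3
    have hlx : 0 ≤ Real.log x := Real.log_nonneg hx3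
    have hxε : 0 ≤ x ^ ε := Real.rpow_nonneg (by linarith) _
    rw [Real.norm_eq_abs, Real.norm_eq_abs, abs_of_nonneg hlx, abs_of_nonneg hxε] at hx1
    have hDL : D * Real.log x ≤ x ^ ε / 2 := by
      have h := mul_le_mul_of_nonneg_left hx1 hD0.le
      have e : D * (1 / (2 * D) * x ^ ε) = x ^ ε / 2 := by field_simp
      rw [e] at h; exact h
    linarith
  have hevN : ∀ᶠ n : ℕ in atTop, C + D * Real.log n < (n : ℝ) ^ ε :=
    (tendsto_natCast_atTop_atTop).eventually hev
  rw [Filter.eventually_atTop] at hevN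
  obtain ⟨N₁, hN₁⟩ := hevN
  refine ⟨max N₁ 2, fun n hn => ?_⟩
  have hn2 : 2 ≤ n := le_trans (le_max_right _ _) hn
  have hP := hN₁ n (le_trans (le_max_left _ _) hn)
  have hn0 : (0 : ℝ) < n := by positivity
  have hn1 : (1 : ℝ) ≤ n := by exact_mod_cast Nat.one_le_of_lt hn2
  have hL0 : 0 ≤ Real.log n := Real.log_nonneg hn1
  have hX0 : 0 ≤ (n : ℝ) ^ ε := Real.rpow_nonneg hn0.le _
  have hbig : 8 * (k : ℝ) ^ 2 + 4 + 8 * k * (k + 2) * Real.log n ≤ (n : ℝ) ^ ε := by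
    nlinarith
  have h24 : 24 * Real.log n < (n : ℝ) ^ ε := by nlinarith
  calc ∑ b ∈ Finset.Icc 1 (n / k),
        ∑ s ∈ Finset.Icc 1 (min b ⌈(n : ℝ) ^ (ε * ℓ)⌉₊),
          (n.choose (n - (k - 1) * b) : ℝ) * (n.choose b : ℝ) *
            (((n - (k - 1) * b) * b).choose s : ℝ) *
            ((n : ℝ) ^ (ε - 1)) ^ s *
            (1 - (n : ℝ) ^ (ε - 1)) ^ ((n - (k - 1) * b) * b - s)
      ≤ ∑ b ∈ Finset.Icc 1 (n / k), (n : ℝ) * Real.exp (-(n : ℝ) ^ ε / 4) := by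
        apply Finset.sum_le_sum
        intro b hb
        rw [Finset.mem_Icc] at hb
        have hb1 : 1 ≤ b := hb.1
        have hkb : k * b ≤ n := by
          rw [mul_comm]
          exact (Nat.le_div_iff_mul_le (by omega : 0 < k)).1 hb.2
        have hbn : b ≤ n := by
          calc b ≤ n / k := hb.2
            _ ≤ n := Nat.div_le_self _ _
        calc ∑ s ∈ Finset.Icc 1 (min b ⌈(n : ℝ) ^ (ε * ℓ)⌉₊),
              (n.choose (n - (k - 1) * b) : ℝ) * (n.choose b : ℝ) *
                (((n - (k - 1) * b) * b).choose s : ℝ) *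
                ((n : ℝ) ^ (ε - 1)) ^ s *
                (1 - (n : ℝ) ^ (ε - 1)) ^ ((n - (k - 1) * b) * b - s)
            ≤ (Finset.Icc 1 (min b ⌈(n : ℝ) ^ (ε * ℓ)⌉₊)).card •
                Real.exp (-(n : ℝ) ^ ε / 4) := by
              apply Finset.sum_le_card_nsmul
              intro s hs
              rw [Finset.mem_Icc] at hs
              exact aux_term_bound hk hε hε1 hn2 hb1 hkb hs.1
                (le_trans hs.2 (min_le_left _ _)) hbig
          _ ≤ (n : ℝ) * Real.exp (-(n : ℝ) ^ ε / 4) := by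
              rw [nsmul_eq_mul]
              apply mul_le_mul_of_nonneg_right _ (Real.exp_nonneg _)
              have hcard : (Finset.Icc 1 (min b ⌈(n : ℝ) ^ (ε * ℓ)⌉₊)).card ≤ n := by
                rw [Nat.card_Icc]
                have := min_le_left b ⌈(n : ℝ) ^ (ε * ℓ)⌉₊
                omega
              exact_mod_cast hcard
    _ ≤ (n : ℝ) * ((n : ℝ) * Real.exp (-(n : ℝ) ^ ε / 4)) := by
        have := Finset.sum_le_card_nsmul (Finset.Icc 1 (n / k))
          (fun _ => (n : ℝ) * Real.exp (-(n : ℝ) ^ ε / 4))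
          ((n : ℝ) * Real.exp (-(n : ℝ) ^ ε / 4)) (fun b _ => le_refl _)
        refine le_trans this ?_
        rw [nsmul_eq_mul]
        apply mul_le_mul_of_nonneg_right _ (by positivity)
        have hcard : (Finset.Icc 1 (n / k)).card ≤ n := by
          rw [Nat.card_Icc]
          have := Nat.div_le_self n k
          omega
        exact_mod_cast hcard
    _ < Real.exp (-(n : ℝ) ^ ε / 6) := by
        have hnL : (n : ℝ) = Real.exp (Real.log n) := (Real.exp_log hn0).symm
        nth_rewrite 1 [hnL]
        nth_rewrite 2 [hnL]
        rw [← Real.exp_add, ← Real.exp_add]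
        apply Real.exp_lt_exp.2
        linarith
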